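/- Generalized traveling-wave (KPP-type) solution (53) of v_t = v_{xx} + δv^m + εv. Let m be real with m≠0, m≠1, m≠−1, let δ and ε be real constants with ε ≠ 0, and let λ, μ, β, C be real constants satisfying λ = ε(1−m)(m+3)/(2(m+1)), μ² = ε(1−m)²/(2(m+1)), and β² = −δ/ε. Let Ω ⊆ ℝ×ℝ be an open set on which β + C·exp(λt + μx) > 0. Then the function v(t,x) = ( β + C·exp(λt + μx) )^{2/(1−m)} satisfies v_t = v_{xx} + δ·v^m + ε·v at every point of Ω. -/

import Mathlib

open Real Set

/-- Generalized traveling-wave (KPP-type) solution (53) of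
`v_t = v_{xx} + δv^m + εv`. -/
theorem kpp_type_solution
    (m δ ε lam μ β C : ℝ)
    (hm0 : m ≠ 0) (hm1 : m ≠ 1) (hm1' : m ≠ -1) (hε : ε ≠ 0)
    (hlam : lam = ε * (1 - m) * (m + 3) / (2 * (m + 1)))
    (hμ : μ ^ 2 = ε * (1 - m) ^ 2 / (2 * (m + 1)))
    (hβ : β ^ 2 = -δ / ε)
    (Ω : Set (ℝ × ℝ)) (hΩ : IsOpen Ω)
    (hpos : ∀ p ∈ Ω, 0 < β + C * Real.exp (lam * p.1 + μ * p.2))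
    (v : ℝ → ℝ → ℝ)
    (hv : ∀ t x : ℝ, v t x = (β + C * Real.exp (lam * t + μ * x)) ^ (2 / (1 - m))) :
    ∀ p ∈ Ω,
      deriv (fun s => v s p.2) p.1
        = deriv (fun y => deriv (fun z => v p.1 z) y) p.2
          + δ * v p.1 p.2 ^ m + ε * v p.1 p.2 := by
  rintro ⟨t, x⟩ hp
  have h1m : (1 : ℝ) - m ≠ 0 := sub_ne_zero.mpr fun h => hm1 h.symm
  have hm1p : m + 1 ≠ 0 := fun h => hm1' (by linarith)
  set pr : ℝ := 2 / (1 - m) with hprdef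
  have hWpos : 0 < β + C * Real.exp (lam * t + μ * x) := hpos (t, x) hp
  -- derivative of the exponent and of W in the x-direction
  have hlin : ∀ (t y : ℝ), HasDerivAt (fun z : ℝ => lam * t + μ * z) μ y := by
    intro t y
    simpa using ((hasDerivAt_id y).const_mul μ).const_add (lam * t)
  have hWx : ∀ (t y : ℝ), HasDerivAt (fun z => β + C * Real.exp (lam * t + μ * z))
      (C * Real.exp (lam * t + μ * y) * μ) y := by
    intro t y
    simpa [mul_assoc] using (((hlin t y).exp).const_mul C).const_add β
  -- first spatial derivative, valid wherever the base is positive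
  have hdx : ∀ y : ℝ, 0 < β + C * Real.exp (lam * t + μ * y) →
      deriv (fun z => v t z) y
        = pr * (β + C * Real.exp (lam * t + μ * y)) ^ (pr - 1)
            * (C * Real.exp (lam * t + μ * y) * μ) := by
    intro y hy
    have hfun : (fun z => v t z) = fun z => (β + C * Real.exp (lam * t + μ * z)) ^ pr := by
      funext z; exact hv t z
    rw [hfun, ((hWx t y).rpow_const (Or.inl hy.ne')).deriv]
    ring
  -- positivity on a neighborhood of x
  have hnbhd : ∀ᶠ y in nhds x, 0 < β + C * Real.exp (lam * t + μ * y) := by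
    have hopen : IsOpen {y : ℝ | (t, y) ∈ Ω} := hΩ.preimage (Continuous.prodMk_right t)
    filter_upwards [hopen.mem_nhds hp] with y hy
    exact hpos (t, y) hy
  have heq : (fun y => deriv (fun z => v t z) y) =ᶠ[nhds x]
      (fun y => pr * (β + C * Real.exp (lam * t + μ * y)) ^ (pr - 1)
        * (C * Real.exp (lam * t + μ * y) * μ)) :=
    hnbhd.mono fun y hy => hdx y hy
  -- second spatial derivative
  have hd2 : deriv (fun y => deriv (fun z => v t z) y) x
      = pr * (pr - 1) * (β + C * Real.exp (lam * t + μ * x)) ^ (pr - 1 - 1)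
          * (C * Real.exp (lam * t + μ * x)) ^ 2 * μ ^ 2
        + pr * (β + C * Real.exp (lam * t + μ * x)) ^ (pr - 1)
          * (C * Real.exp (lam * t + μ * x)) * μ ^ 2 := by
    rw [heq.deriv_eq]
    have hA := (hWx t x).rpow_const (p := pr - 1) (Or.inl hWpos.ne')
    have hB : HasDerivAt (fun y => C * Real.exp (lam * t + μ * y) * μ)
        (C * Real.exp (lam * t + μ * x) * μ * μ) x := by
      simpa [mul_assoc] using (((hlin t x).exp).const_mul C).mul_const μ
    have hprod := (hA.mul hB).const_mul pr
    have hfun2 : (fun y => pr * (β + C * Real.exp (lam * t + μ * y)) ^ (pr - 1)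
        * (C * Real.exp (lam * t + μ * y) * μ))
        = (fun y => pr * ((β + C * Real.exp (lam * t + μ * y)) ^ (pr - 1)
            * (C * Real.exp (lam * t + μ * y) * μ))) := by
      funext y; ring
    rw [hfun2]
    exact hprod.deriv.trans (by ring)
  -- time derivative
  have hdt : deriv (fun s => v s x) t
      = pr * (β + C * Real.exp (lam * t + μ * x)) ^ (pr - 1)
        * (C * Real.exp (lam * t + μ * x)) * lam := by
    have hfun : (fun s => v s x) = fun s => (β + C * Real.exp (lam * s + μ * x)) ^ pr := by
      funext s; exact hv s x
    rw [hfun]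
    have hlin' : HasDerivAt (fun s : ℝ => lam * s + μ * x) lam t := by
      simpa using ((hasDerivAt_id t).const_mul lam).add_const (μ * x)
    have hWt : HasDerivAt (fun s => β + C * Real.exp (lam * s + μ * x))
        (C * Real.exp (lam * t + μ * x) * lam) t := by
      simpa [mul_assoc] using ((hlin'.exp).const_mul C).const_add β
    have := ((hWt).rpow_const (p := pr) (Or.inl hWpos.ne')).deriv
    rw [this]; ring
  -- now the algebra
  rw [hdt, hd2, hv]
  set E : ℝ := C * Real.exp (lam * t + μ * x) with hE
  have hw : (0:ℝ) < β + E := hWpos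
  have hpm : pr * m = pr - 2 := by
    rw [hprdef]; field_simp; ring
  have hpow_m : ((β + E) ^ pr) ^ m = (β + E) ^ pr / (β + E) ^ 2 := by
    rw [← Real.rpow_mul hw.le, hpm, Real.rpow_sub hw, Real.rpow_two]
  have e1 : (β + E) ^ (pr - 1) = (β + E) ^ pr / (β + E) := by
    rw [Real.rpow_sub hw, Real.rpow_one]
  have e2 : (β + E) ^ (pr - 1 - 1) = (β + E) ^ pr / (β + E) ^ 2 := by
    rw [show pr - 1 - 1 = pr - 2 by ring, Real.rpow_sub hw, Real.rpow_two]
  have hδ : δ = -(ε * β ^ 2) := by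
    rw [hβ]; field_simp
  rw [hpow_m, e1, e2, hμ, hδ, hlam, hprdef]
  have hwne : β + E ≠ 0 := hw.ne'
  field_simp
  ring
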